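/- arXiv:1411.4559 — 3 statements merged into one kernel-verified Lean document; each statement's English description precedes it below -/
import Mathlib

section
/- Let (Ω, Σ) be a measurable space, H a complex Hilbert space, and E : Σ → B(H) an operator-valued probability measure (E(Ω) = I_H). Suppose E has a Hilbert dilation system: there exist a complex Hilbert space H̃, a projection-valued probability measure Ẽ : Σ → B(H̃), and bounded linear operators T : H → H̃ and S : H̃ → H with E(B) = S ∘ Ẽ(B) ∘ T for all B ∈ Σ. Then there exist a complex Hilbert space K, a linear isometry V : H → K, and a projection-valued probability measure F : Σ → B(K) such that E(B) = V* ∘ F(B) ∘ V for all B ∈ Σ. -/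
universe u v

/-- An operator-valued measure on a measurable space `(Ω, Σ)`: a map `E` from sets to
bounded operators that is countably additive (in the strong, equivalently weak, operator
topology) on measurable sets. -/
def IsOperatorValuedMeasure {Ω : Type v} [MeasurableSpace Ω]
    {X Y : Type*} [NormedAddCommGroup X] [NormedSpace ℂ X]
    [NormedAddCommGroup Y] [NormedSpace ℂ Y]
    (E : Set Ω → (X →L[ℂ] Y)) : Prop :=
  ∀ B : ℕ → Set Ω, (∀ i, MeasurableSet (B i)) → Pairwise (Function.onFun Disjoint B) →
    ∀ x : X, HasSum (fun i : ℕ => E (B i) x) (E (⋃ i, B i) x)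

/-- A projection-valued probability measure: an OVM `F` with `F(Ω) = I` and each `F(B)`
idempotent. -/
def IsProjectionValuedProbabilityMeasure {Ω : Type v} [MeasurableSpace Ω]
    {Z : Type*} [NormedAddCommGroup Z] [NormedSpace ℂ Z]
    (F : Set Ω → (Z →L[ℂ] Z)) : Prop :=
  IsOperatorValuedMeasure F ∧
  F Set.univ = ContinuousLinearMap.id ℂ Z ∧
  ∀ B : Set Ω, MeasurableSet B → (F B).comp (F B) = F B

open scoped Classical

/-- **Improving Hilbert dilations to isometric ones** (Han–Larson–Liu–Liu).
If an operator-valued probability measure `E : Σ → B(H)` on a complex Hilbert space `H`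
admits some Hilbert dilation system `(Ẽ, H̃, S, T)` with `E(B) = S Ẽ(B) T`, then it admits
a Hilbert dilation system `(F, K, V*, V)` in which `V : H → K` is an isometric embedding:
`E(B) = V* F(B) V` for all `B ∈ Σ`. -/
theorem hilbert_dilation_improves_to_isometry
    {Ω : Type v} [MeasurableSpace Ω]
    {H : Type u} [NormedAddCommGroup H] [InnerProductSpace ℂ H] [CompleteSpace H]
    (E : Set Ω → (H →L[ℂ] H))
    (hE : IsOperatorValuedMeasure E)
    (hprob : E Set.univ = ContinuousLinearMap.id ℂ H)
    (h_dil : ∃ (Ht : Type u) (_ : NormedAddCommGroup Ht) (_ : InnerProductSpace ℂ Ht)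
      (_ : CompleteSpace Ht) (Et : Set Ω → (Ht →L[ℂ] Ht))
      (T : H →L[ℂ] Ht) (S : Ht →L[ℂ] H),
      IsProjectionValuedProbabilityMeasure Et ∧
      ∀ B : Set Ω, MeasurableSet B → E B = S.comp ((Et B).comp T)) :
    ∃ (K : Type u) (_ : NormedAddCommGroup K) (_ : InnerProductSpace ℂ K)
      (_ : CompleteSpace K) (V : H →ₗᵢ[ℂ] K) (F : Set Ω → (K →L[ℂ] K)),
      IsProjectionValuedProbabilityMeasure F ∧
      ∀ B : Set Ω, MeasurableSet B →
        E B = (ContinuousLinearMap.adjoint V.toContinuousLinearMap).comp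
          ((F B).comp V.toContinuousLinearMap) := by
  obtain ⟨Ht, _, _, _, Et, T, S, ⟨hEtOVM, hEtuniv, hEtproj⟩, hdil⟩ := h_dil
  by_cases hΩ : Nonempty Ω
  case neg =>
    -- Ω is empty, hence H is trivial
    have huniv : (Set.univ : Set Ω) = ∅ := by
      simpa [Set.univ_eq_empty_iff] using not_nonempty_iff.mp hΩ
    have hzero : ∀ x : H, x = 0 := by
      intro x
      have h1 : HasSum (fun _ : ℕ => E (∅ : Set Ω) x) (E (⋃ _ : ℕ, (∅ : Set Ω)) x) :=
        hE (fun _ => ∅) (fun _ => MeasurableSet.empty) (fun i j _ => by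
          simp [Function.onFun]) x
      have hEempty : E (∅ : Set Ω) = ContinuousLinearMap.id ℂ H := by
        rw [← huniv]; exact hprob
      have h2 : HasSum (fun _ : ℕ => x) x := by
        simpa [hEempty] using h1
      have h3 : HasSum (fun _ : ℕ => x) (x - x) := by
        have := (hasSum_nat_add_iff' (f := fun _ : ℕ => x) 1).mpr h2
        simpa using this
      have := h2.unique h3
      simpa using this
    haveI : Subsingleton H := ⟨fun a b => by rw [hzero a, hzero b]⟩
    refine ⟨H, inferInstance, inferInstance, inferInstance, LinearIsometry.id,
      fun _ => ContinuousLinearMap.id ℂ H, ⟨?_, rfl, ?_⟩, ?_⟩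
    · intro B _ _ x
      have : x = 0 := hzero x
      subst this
      simpa using hasSum_zero
    · intro B _; ext x; exact Subsingleton.elim _ _
    · intro B _; ext x; exact Subsingleton.elim _ _
  case pos =>
    obtain ⟨ω₀⟩ := hΩ
    set K := WithLp 2 (H × Ht) with hK
    let e := WithLp.prodContinuousLinearEquiv (p := 2) (𝕜 := ℂ) (α := H) (β := Ht)
    -- S ∘ T = id
    have hST : ∀ h : H, S (T h) = h := by
      intro h
      have := hdil Set.univ MeasurableSet.univ
      rw [hprob, hEtuniv] at this
      have := congrArg (fun (f : H →L[ℂ] H) => f h) this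
      simpa using this.symm
    -- the involution C
    let C : (H × Ht) →L[ℂ] (H × Ht) :=
      (S.comp (ContinuousLinearMap.snd ℂ H Ht)).prod
        (T.comp (ContinuousLinearMap.fst ℂ H Ht) + ContinuousLinearMap.snd ℂ H Ht
          - (T.comp S).comp (ContinuousLinearMap.snd ℂ H Ht))
    have hCapp : ∀ z : H × Ht, C z = (S z.2, T z.1 + z.2 - T (S z.2)) := by
      intro z; rfl
    have hCC : ∀ z : H × Ht, C (C z) = z := by
      intro z
      rcases z with ⟨h, k⟩
      rw [hCapp, hCapp]
      simp only [map_add, map_sub, hST]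
      rw [Prod.mk.injEq]
      exact ⟨by abel, by abel⟩
    -- the PVM D on H × Ht
    let D : Set Ω → ((H × Ht) →L[ℂ] (H × Ht)) := fun B =>
      (if ω₀ ∈ B then ContinuousLinearMap.fst ℂ H Ht else 0).prod
        ((Et B).comp (ContinuousLinearMap.snd ℂ H Ht))
    have hDapp : ∀ (B : Set Ω) (z : H × Ht),
        D B z = ((if ω₀ ∈ B then z.1 else 0), Et B z.2) := by
      intro B z
      by_cases hB : ω₀ ∈ B <;> simp [D, hB]
    -- F
    let F : Set Ω → (K →L[ℂ] K) := fun B =>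
      (e.symm.toContinuousLinearMap.comp ((C.comp ((D B).comp C)).comp
        e.toContinuousLinearMap))
    have hFapp : ∀ (B : Set Ω) (x : K), F B x = e.symm (C (D B (C (e x)))) := by
      intro B x; rfl
    -- the isometry V
    let Vl : H →L[ℂ] K := e.symm.toContinuousLinearMap.comp (ContinuousLinearMap.inl ℂ H Ht)
    have hVl : ∀ h : H, e (Vl h) = (h, 0) := by
      intro h
      simp [Vl]
    have hVnorm : ∀ h : H, ‖Vl h‖ = ‖h‖ := by
      intro h
      rw [norm_eq_sqrt_re_inner (𝕜 := ℂ) (Vl h), norm_eq_sqrt_re_inner (𝕜 := ℂ) h]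
      congr 1
      have : (inner ℂ (Vl h) (Vl h) : ℂ) = inner ℂ h h := by
        rw [WithLp.prod_inner_apply]
        have h1 : (Vl h).ofLp.1 = h := congrArg Prod.fst (hVl h)
        have h2 : (Vl h).ofLp.2 = (0 : Ht) := congrArg Prod.snd (hVl h)
        rw [h1, h2]
        simp
      rw [this]
    let V : H →ₗᵢ[ℂ] K := ⟨Vl.toLinearMap, hVnorm⟩
    have hVcoe : ∀ h : H, V.toContinuousLinearMap h = Vl h := fun _ => rfl
    -- the adjoint of V is the first coordinate
    let W : K →L[ℂ] H := (ContinuousLinearMap.fst ℂ H Ht).comp e.toContinuousLinearMap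
    have hW : W = ContinuousLinearMap.adjoint V.toContinuousLinearMap := by
      rw [ContinuousLinearMap.eq_adjoint_iff]
      intro x y
      have h1 : (V.toContinuousLinearMap y).ofLp.1 = y := congrArg Prod.fst (hVl y)
      have h2 : (V.toContinuousLinearMap y).ofLp.2 = (0 : Ht) := congrArg Prod.snd (hVl y)
      rw [WithLp.prod_inner_apply, h1, h2]
      simp only [inner_zero_right, add_zero]
      rfl
    refine ⟨K, inferInstance, inferInstance, inferInstance, V, F, ⟨?_, ?_, ?_⟩, ?_⟩
    · -- countable additivity of F
      intro B hBmeas hBdisj x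
      set y : H × Ht := C (e x) with hy
      have hfst : HasSum (fun i : ℕ => if ω₀ ∈ B i then y.1 else 0)
          (if ω₀ ∈ ⋃ i, B i then y.1 else 0) := by
        by_cases hmem : ω₀ ∈ ⋃ i, B i
        · obtain ⟨i₀, hi₀⟩ := Set.mem_iUnion.mp hmem
          rw [if_pos hmem]
          have : (fun i : ℕ => if ω₀ ∈ B i then y.1 else 0)
              = fun i : ℕ => if i = i₀ then y.1 else 0 := by
            funext i
            by_cases hii : i = i₀
            · subst hii; rw [if_pos hi₀, if_pos rfl]
            · have : ω₀ ∉ B i := fun hc =>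
                (Set.disjoint_left.mp (hBdisj hii) hc) hi₀
              rw [if_neg this, if_neg hii]
          rw [this]
          exact hasSum_ite_eq i₀ y.1
        · rw [if_neg hmem]
          have : (fun i : ℕ => if ω₀ ∈ B i then y.1 else 0) = fun _ : ℕ => (0 : H) := by
            funext i
            rw [if_neg (fun hc => hmem (Set.mem_iUnion.mpr ⟨i, hc⟩))]
          rw [this]
          exact hasSum_zero
      have hsnd : HasSum (fun i : ℕ => Et (B i) y.2) (Et (⋃ i, B i) y.2) :=
        hEtOVM B hBmeas hBdisj y.2
      have hD : HasSum (fun i : ℕ => D (B i) y) (D (⋃ i, B i) y) := by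
        have := hfst.prodMk hsnd
        simpa [hDapp] using this
      have := hD.mapL (e.symm.toContinuousLinearMap.comp C)
      simpa [hFapp, hy] using this
    · -- F univ = id
      ext x
      have : F Set.univ x = e.symm (C (D Set.univ (C (e x)))) := hFapp _ _
      rw [this]
      have hD : D Set.univ (C (e x)) = C (e x) := by
        rw [hDapp, if_pos (Set.mem_univ ω₀), hEtuniv]
        simp
      rw [hD, hCC]
      simp
    · -- idempotency
      intro B hB
      ext x
      simp only [ContinuousLinearMap.comp_apply]
      rw [hFapp, hFapp]
      congr 1
      rw [e.apply_symm_apply, hCC]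
      congr 1
      rw [hDapp, hDapp]
      have hEt2 : Et B (Et B ((C (e x)).2)) = Et B ((C (e x)).2) := by
        have := congrArg (fun f : Ht →L[ℂ] Ht => f ((C (e x)).2)) (hEtproj B hB)
        simpa using this
      by_cases hm : ω₀ ∈ B <;> simp [hm, hEt2]
    · -- the dilation identity
      intro B hB
      rw [← hW]
      ext h
      simp only [ContinuousLinearMap.comp_apply]
      have c1 : C (h, (0 : Ht)) = (0, T h) := by
        rw [hCapp]; simp
      have c2 : D B ((0 : H), T h) = (0, Et B (T h)) := by
        rw [hDapp]; simp
      have hWz : ∀ z : H × Ht, W (e.symm z) = z.1 := by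
        intro z
        simp only [W, ContinuousLinearMap.comp_apply]
        rfl
      rw [hVcoe, hFapp, hVl, c1, c2, hWz, hCapp]
      simp only
      rw [hdil B hB]
      simp
end

section
/- Let (x_i, y_i)_{i∈ℕ} be a framing for a separable complex Hilbert space H such that inf_i ‖x_i‖·‖y_i‖ > 0. Then there exist scalars α_i, β_i ∈ ℂ with α_i·conj(β_i) = 1 for all i such that (α_i x_i)_{i∈ℕ} and (β_i y_i)_{i∈ℕ} are both frames for H. -/
universe u

open scoped ComplexConjugate

/-- Partial sums of a convergent (unconditional) series are bounded. -/
lemma aux_bounded_partial_sums {H : Type*} [NormedAddCommGroup H] {f : ℕ → H} {a : H}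
    (h : HasSum f a) : ∃ C : ℝ, ∀ F : Finset ℕ, ‖∑ i ∈ F, f i‖ ≤ C := by
  have h1 : ∀ᶠ F in Filter.atTop, dist (∑ i ∈ F, f i) a < 1 :=
    (Metric.tendsto_nhds.mp h) 1 one_pos
  obtain ⟨F₀, hF₀⟩ := Filter.eventually_atTop.mp h1
  refine ⟨‖a‖ + 1 + ∑ i ∈ F₀, ‖f i‖, fun F => ?_⟩
  have hsub : F ∪ (F₀ \ F) = F ∪ F₀ := Finset.union_sdiff_self_eq_union
  have hdisj : Disjoint F (F₀ \ F) := Finset.disjoint_sdiff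
  have hsum : ∑ i ∈ F, f i = ∑ i ∈ F ∪ F₀, f i - ∑ i ∈ F₀ \ F, f i := by
    rw [← hsub, Finset.sum_union hdisj]; abel
  have h2 : ‖∑ i ∈ F ∪ F₀, f i‖ ≤ ‖a‖ + 1 := by
    have := hF₀ (F ∪ F₀) Finset.subset_union_right
    have := norm_le_norm_add_const_of_dist_le this.le
    linarith [this]
  have h3 : ‖∑ i ∈ F₀ \ F, f i‖ ≤ ∑ i ∈ F₀, ‖f i‖ := by
    refine (norm_sum_le _ _).trans ?_
    exact Finset.sum_le_sum_of_subset_of_nonneg (Finset.sdiff_subset)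
      (fun i _ _ => norm_nonneg _)
  rw [hsum]
  calc ‖∑ i ∈ F ∪ F₀, f i - ∑ i ∈ F₀ \ F, f i‖
      ≤ ‖∑ i ∈ F ∪ F₀, f i‖ + ‖∑ i ∈ F₀ \ F, f i‖ := norm_sub_le _ _
    _ ≤ ‖a‖ + 1 + ∑ i ∈ F₀, ‖f i‖ := by linarith

/-- There is a choice of signs making the squared norm of the signed sum at least
the sum of squared norms (parallelogram law / Rademacher averaging). -/
lemma aux_exists_signs {H : Type*} [NormedAddCommGroup H] [InnerProductSpace ℂ H]
    (u : ℕ → H) (F : Finset ℕ) :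
    ∃ ε : ℕ → ℂ, (∀ i, ε i = 1 ∨ ε i = -1) ∧
      ∑ i ∈ F, ‖u i‖ ^ 2 ≤ ‖∑ i ∈ F, ε i • u i‖ ^ 2 := by
  classical
  induction F using Finset.induction_on with
  | empty => exact ⟨fun _ => 1, fun _ => Or.inl rfl, by simp⟩
  | @insert a F ha ih =>
    obtain ⟨ε, hε, hle⟩ := ih
    set s := ∑ i ∈ F, ε i • u i with hs
    have par := parallelogram_law_with_norm ℂ s (u a)
    have key : ‖s‖ ^ 2 + ‖u a‖ ^ 2 ≤ ‖s + u a‖ ^ 2 ∨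
        ‖s‖ ^ 2 + ‖u a‖ ^ 2 ≤ ‖s - u a‖ ^ 2 := by
      by_contra hcon
      push_neg at hcon
      linarith [hcon.1, hcon.2]
    rcases key with hk | hk
    · refine ⟨Function.update ε a 1, fun i => ?_, ?_⟩
      · rcases eq_or_ne i a with rfl | hne
        · simp
        · simpa [Function.update_of_ne hne] using hε i
      · rw [Finset.sum_insert ha, Finset.sum_insert ha]
        have hcongr : ∑ i ∈ F, Function.update ε a 1 i • u i = s := by
          refine Finset.sum_congr rfl fun i hi => ?_
          rw [Function.update_of_ne (by rintro rfl; exact ha hi)]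
        rw [hcongr, Function.update_self, one_smul]
        calc ‖u a‖ ^ 2 + ∑ i ∈ F, ‖u i‖ ^ 2 ≤ ‖u a‖ ^ 2 + ‖s‖ ^ 2 := by linarith
          _ ≤ ‖s + u a‖ ^ 2 := by linarith
          _ = ‖u a + s‖ ^ 2 := by rw [add_comm]
    · refine ⟨Function.update ε a (-1), fun i => ?_, ?_⟩
      · rcases eq_or_ne i a with rfl | hne
        · simp
        · simpa [Function.update_of_ne hne] using hε i
      · rw [Finset.sum_insert ha, Finset.sum_insert ha]
        have hcongr : ∑ i ∈ F, Function.update ε a (-1) i • u i = s := by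
          refine Finset.sum_congr rfl fun i hi => ?_
          rw [Function.update_of_ne (by rintro rfl; exact ha hi)]
        rw [hcongr, Function.update_self, neg_one_smul]
        calc ‖u a‖ ^ 2 + ∑ i ∈ F, ‖u i‖ ^ 2 ≤ ‖u a‖ ^ 2 + ‖s‖ ^ 2 := by linarith
          _ ≤ ‖s - u a‖ ^ 2 := by linarith
          _ = ‖-u a + s‖ ^ 2 := by
            have heq : (-u a + s : H) = s - u a := by abel
            rw [heq]

/-- A sequence `(zᵢ)` in a complex Hilbert space is a frame if there are constants
`0 < A ≤ B < ∞` with `A‖v‖² ≤ ∑ᵢ |⟨v, zᵢ⟩|² ≤ B‖v‖²` for all `v`. -/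
def IsFrame {H : Type*} [NormedAddCommGroup H] [InnerProductSpace ℂ H]
    (z : ℕ → H) : Prop :=
  ∃ A B : ℝ, 0 < A ∧ A ≤ B ∧ ∀ v : H,
    Summable (fun n : ℕ => ‖(inner ℂ v (z n) : ℂ)‖ ^ 2) ∧
    A * ‖v‖ ^ 2 ≤ ∑' n : ℕ, ‖(inner ℂ v (z n) : ℂ)‖ ^ 2 ∧
    ∑' n : ℕ, ‖(inner ℂ v (z n) : ℂ)‖ ^ 2 ≤ B * ‖v‖ ^ 2

lemma aux_key_bounds {H : Type*} [NormedAddCommGroup H] [InnerProductSpace ℂ H]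
    [CompleteSpace H] (x y : ℕ → H)
    (h_framing : ∀ v : H, HasSum (fun i : ℕ => (inner ℂ (y i) v : ℂ) • x i) v) :
    ∃ K : ℝ, 0 ≤ K ∧
      (∀ (v : H) (F : Finset ℕ),
        ∑ i ∈ F, ‖(inner ℂ (y i) v : ℂ)‖ ^ 2 * ‖x i‖ ^ 2 ≤ K ^ 2 * ‖v‖ ^ 2) ∧
      (∀ (v : H) (F : Finset ℕ),
        ∑ i ∈ F, ‖(inner ℂ (x i) v : ℂ)‖ ^ 2 * ‖y i‖ ^ 2 ≤ K ^ 2 * ‖v‖ ^ 2) := by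
  classical
  set T : ℕ → H →L[ℂ] H := fun i => (innerSL ℂ (y i)).smulRight (x i) with hT
  set T' : ℕ → H →L[ℂ] H := fun i => (innerSL ℂ (x i)).smulRight (y i) with hT'
  set g : Finset ℕ × (ℕ → Bool) → H →L[ℂ] H :=
    fun p => ∑ i ∈ p.1, (if p.2 i then (1 : ℂ) else -1) • T i with hg
  set g' : Finset ℕ × (ℕ → Bool) → H →L[ℂ] H :=
    fun p => ∑ i ∈ p.1, (if p.2 i then (1 : ℂ) else -1) • T' i with hg'
  have hgapp : ∀ p v, g p v = ∑ i ∈ p.1,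
      (if p.2 i then (1 : ℂ) else -1) • ((inner ℂ (y i) v : ℂ) • x i) := by
    intro p v
    simp only [hg, hT, ContinuousLinearMap.sum_apply, ContinuousLinearMap.smul_apply,
      ContinuousLinearMap.smulRight_apply, innerSL_apply_apply, ite_smul, one_smul, neg_smul]
    refine Finset.sum_congr rfl fun i _ => ?_
    split <;> simp
  have hg'app : ∀ p v, g' p v = ∑ i ∈ p.1,
      (if p.2 i then (1 : ℂ) else -1) • ((inner ℂ (x i) v : ℂ) • y i) := by
    intro p v
    simp only [hg', hT', ContinuousLinearMap.sum_apply, ContinuousLinearMap.smul_apply,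
      ContinuousLinearMap.smulRight_apply, innerSL_apply_apply, ite_smul, one_smul, neg_smul]
    refine Finset.sum_congr rfl fun i _ => ?_
    split <;> simp
  -- pointwise bound
  have hpt : ∀ v : H, ∃ C, ∀ p, ‖g p v‖ ≤ C := by
    intro v
    obtain ⟨C, hC⟩ := aux_bounded_partial_sums (h_framing v)
    refine ⟨C + C, fun p => ?_⟩
    rw [hgapp]
    rw [← Finset.sum_filter_add_sum_filter_not p.1 (fun i => p.2 i = true)]
    have h1 : ∑ i ∈ p.1.filter (fun i => p.2 i = true),
        (if p.2 i then (1 : ℂ) else -1) • ((inner ℂ (y i) v : ℂ) • x i)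
        = ∑ i ∈ p.1.filter (fun i => p.2 i = true), (inner ℂ (y i) v : ℂ) • x i := by
      refine Finset.sum_congr rfl fun i hi => ?_
      have : p.2 i = true := (Finset.mem_filter.mp hi).2
      simp [this]
    have h2 : ∑ i ∈ p.1.filter (fun i => ¬ p.2 i = true),
        (if p.2 i then (1 : ℂ) else -1) • ((inner ℂ (y i) v : ℂ) • x i)
        = -∑ i ∈ p.1.filter (fun i => ¬ p.2 i = true), (inner ℂ (y i) v : ℂ) • x i := by
      rw [← Finset.sum_neg_distrib]
      refine Finset.sum_congr rfl fun i hi => ?_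
      have : ¬ p.2 i = true := (Finset.mem_filter.mp hi).2
      simp [this]
    rw [h1, h2]
    calc ‖_ + _‖ ≤ ‖∑ i ∈ p.1.filter (fun i => p.2 i = true), (inner ℂ (y i) v : ℂ) • x i‖
          + ‖-∑ i ∈ p.1.filter (fun i => ¬ p.2 i = true), (inner ℂ (y i) v : ℂ) • x i‖ :=
        norm_add_le _ _
      _ ≤ C + C := by rw [norm_neg]; exact add_le_add (hC _) (hC _)
  obtain ⟨K₀, hK₀⟩ := banach_steinhaus hpt
  set K := max K₀ 0 with hK
  have hKnn : 0 ≤ K := le_max_right _ _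
  have hgK : ∀ p, ‖g p‖ ≤ K := fun p => (hK₀ p).trans (le_max_left _ _)
  -- adjoint identity
  have hadj : ∀ p, g' p = ContinuousLinearMap.adjoint (g p) := by
    intro p
    rw [ContinuousLinearMap.eq_adjoint_iff]
    intro u w
    rw [hg'app, hgapp, sum_inner, inner_sum]
    refine Finset.sum_congr rfl fun i _ => ?_
    rcases Bool.eq_false_or_eq_true (p.2 i) with hb | hb <;>
      simp [hb, inner_smul_left, inner_smul_right, inner_conj_symm] <;> ring
  have hg'K : ∀ p, ‖g' p‖ ≤ K := by
    intro p
    rw [hadj p, ContinuousLinearMap.adjoint]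
    rw [LinearIsometryEquiv.norm_map]
    exact hgK p
  refine ⟨K, hKnn, ?_, ?_⟩
  · intro v F
    obtain ⟨ε, hε, hle⟩ := aux_exists_signs (fun i => (inner ℂ (y i) v : ℂ) • x i) F
    set b : ℕ → Bool := fun i => decide (ε i = 1) with hb
    have heq : ∑ i ∈ F, ε i • ((inner ℂ (y i) v : ℂ) • x i) = g (F, b) v := by
      rw [hgapp]
      refine Finset.sum_congr rfl fun i _ => ?_
      have hbi : (if b i = true then (1 : ℂ) else -1) = ε i := by
        rcases hε i with h1 | h1 <;>
          simp [hb, h1, show (-1 : ℂ) ≠ 1 by norm_num]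
      rw [hbi]
    have hnorm : ∀ i, ‖((inner ℂ (y i) v : ℂ) • x i)‖ ^ 2
        = ‖(inner ℂ (y i) v : ℂ)‖ ^ 2 * ‖x i‖ ^ 2 := by
      intro i; rw [norm_smul, mul_pow]
    calc ∑ i ∈ F, ‖(inner ℂ (y i) v : ℂ)‖ ^ 2 * ‖x i‖ ^ 2
        = ∑ i ∈ F, ‖((inner ℂ (y i) v : ℂ) • x i)‖ ^ 2 := by
          exact (Finset.sum_congr rfl fun i _ => (hnorm i).symm)
      _ ≤ ‖∑ i ∈ F, ε i • ((inner ℂ (y i) v : ℂ) • x i)‖ ^ 2 := hle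
      _ = ‖g (F, b) v‖ ^ 2 := by rw [heq]
      _ ≤ (K * ‖v‖) ^ 2 := by
          have h1 : ‖g (F, b) v‖ ≤ K * ‖v‖ :=
            (ContinuousLinearMap.le_opNorm _ _).trans
              (mul_le_mul_of_nonneg_right (hgK _) (norm_nonneg _))
          exact pow_le_pow_left₀ (norm_nonneg _) h1 2
      _ = K ^ 2 * ‖v‖ ^ 2 := by ring
  · intro v F
    obtain ⟨ε, hε, hle⟩ := aux_exists_signs (fun i => (inner ℂ (x i) v : ℂ) • y i) F
    set b : ℕ → Bool := fun i => decide (ε i = 1) with hb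
    have heq : ∑ i ∈ F, ε i • ((inner ℂ (x i) v : ℂ) • y i) = g' (F, b) v := by
      rw [hg'app]
      refine Finset.sum_congr rfl fun i _ => ?_
      have hbi : (if b i = true then (1 : ℂ) else -1) = ε i := by
        rcases hε i with h1 | h1 <;>
          simp [hb, h1, show (-1 : ℂ) ≠ 1 by norm_num]
      rw [hbi]
    calc ∑ i ∈ F, ‖(inner ℂ (x i) v : ℂ)‖ ^ 2 * ‖y i‖ ^ 2
        = ∑ i ∈ F, ‖((inner ℂ (x i) v : ℂ) • y i)‖ ^ 2 := by
          refine Finset.sum_congr rfl fun i _ => ?_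
          rw [norm_smul, mul_pow]
      _ ≤ ‖∑ i ∈ F, ε i • ((inner ℂ (x i) v : ℂ) • y i)‖ ^ 2 := hle
      _ = ‖g' (F, b) v‖ ^ 2 := by rw [heq]
      _ ≤ (K * ‖v‖) ^ 2 := by
          have h1 : ‖g' (F, b) v‖ ≤ K * ‖v‖ :=
            (ContinuousLinearMap.le_opNorm _ _).trans
              (mul_le_mul_of_nonneg_right (hg'K _) (norm_nonneg _))
          exact pow_le_pow_left₀ (norm_nonneg _) h1 2
      _ = K ^ 2 * ‖v‖ ^ 2 := by ring

/-- **Rescaling framings** (Han–Larson–Liu–Liu). -/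
theorem framing_rescalable_of_inf_norm_pos
    {H : Type u} [NormedAddCommGroup H] [InnerProductSpace ℂ H] [CompleteSpace H]
    [TopologicalSpace.SeparableSpace H]
    (x y : ℕ → H)
    (h_framing : ∀ v : H, HasSum (fun i : ℕ => (inner ℂ (y i) v : ℂ) • x i) v)
    (h_inf : ∃ c : ℝ, 0 < c ∧ ∀ i : ℕ, c ≤ ‖x i‖ * ‖y i‖) :
    ∃ α β : ℕ → ℂ, (∀ i, α i * starRingEnd ℂ (β i) = 1) ∧
      IsFrame (fun i => α i • x i) ∧ IsFrame (fun i => β i • y i) := by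
  obtain ⟨c, hc, hcle⟩ := h_inf
  obtain ⟨K, hK, hDx, hDy⟩ := aux_key_bounds x y h_framing
  have hx0 : ∀ i, 0 < ‖x i‖ := by
    intro i
    rcases (norm_nonneg (x i)).lt_or_eq with h | h
    · exact h
    · exfalso; have := hcle i; rw [← h] at this; simp at this; linarith
  have hy0 : ∀ i, 0 < ‖y i‖ := by
    intro i
    rcases (norm_nonneg (y i)).lt_or_eq with h | h
    · exact h
    · exfalso; have := hcle i; rw [← h] at this; simp at this; linarith
  set B : ℝ := max (K ^ 2 / c) 1 with hBdef
  have hB1 : (1 : ℝ) ≤ B := le_max_right _ _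
  have hBpos : (0 : ℝ) < B := lt_of_lt_of_le one_pos hB1
  set A : ℝ := 1 / B with hAdef
  have hApos : 0 < A := by positivity
  have hAB : A ≤ B := by
    rw [hAdef]
    calc 1 / B ≤ 1 := by
          rw [div_le_one hBpos]; exact hB1
      _ ≤ B := hB1
  set αr : ℕ → ℝ := fun i => Real.sqrt (‖y i‖ / ‖x i‖) with hαr
  set βr : ℕ → ℝ := fun i => Real.sqrt (‖x i‖ / ‖y i‖) with hβr
  have hαβ : ∀ i, αr i * βr i = 1 := by
    intro i
    rw [hαr, hβr]
    rw [← Real.sqrt_mul (by positivity)]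
    rw [show ‖y i‖ / ‖x i‖ * (‖x i‖ / ‖y i‖) = 1 by
      rw [div_mul_div_comm, mul_comm (‖y i‖) (‖x i‖)]
      exact div_self (mul_pos (hx0 i) (hy0 i)).ne']
    exact Real.sqrt_one
  -- summand identities
  have hsx : ∀ (v : H) (i : ℕ),
      ‖(inner ℂ v ((αr i : ℂ) • x i) : ℂ)‖ ^ 2 = (αr i * ‖(inner ℂ v (x i) : ℂ)‖) ^ 2 := by
    intro v i
    rw [inner_smul_right, norm_mul, Complex.norm_real,
      Real.norm_eq_abs, abs_of_nonneg (Real.sqrt_nonneg _)]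
  have hsy : ∀ (v : H) (i : ℕ),
      ‖(inner ℂ v ((βr i : ℂ) • y i) : ℂ)‖ ^ 2 = (βr i * ‖(inner ℂ v (y i) : ℂ)‖) ^ 2 := by
    intro v i
    rw [inner_smul_right, norm_mul, Complex.norm_real,
      Real.norm_eq_abs, abs_of_nonneg (Real.sqrt_nonneg _)]
  have hαsq : ∀ i, αr i ^ 2 = ‖y i‖ / ‖x i‖ := fun i => Real.sq_sqrt (by positivity)
  have hβsq : ∀ i, βr i ^ 2 = ‖x i‖ / ‖y i‖ := fun i => Real.sq_sqrt (by positivity)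
  -- upper bounds on partial sums
  have hupx : ∀ (v : H) (F : Finset ℕ),
      ∑ i ∈ F, (αr i * ‖(inner ℂ v (x i) : ℂ)‖) ^ 2 ≤ B * ‖v‖ ^ 2 := by
    intro v F
    have hterm : ∀ i, (αr i * ‖(inner ℂ v (x i) : ℂ)‖) ^ 2
        ≤ ‖(inner ℂ (x i) v : ℂ)‖ ^ 2 * ‖y i‖ ^ 2 / c := by
      intro i
      rw [mul_pow, hαsq, norm_inner_symm]
      have hid : ‖y i‖ / ‖x i‖ * ‖(inner ℂ (x i) v : ℂ)‖ ^ 2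
          = (‖(inner ℂ (x i) v : ℂ)‖ ^ 2 * ‖y i‖ ^ 2) / (‖x i‖ * ‖y i‖) := by
        rw [eq_div_iff (mul_pos (hx0 i) (hy0 i)).ne']
        field_simp [(hx0 i).ne', (hy0 i).ne']
      rw [hid]
      exact div_le_div_of_nonneg_left (by positivity) hc (hcle i)
    calc ∑ i ∈ F, (αr i * ‖(inner ℂ v (x i) : ℂ)‖) ^ 2
        ≤ ∑ i ∈ F, ‖(inner ℂ (x i) v : ℂ)‖ ^ 2 * ‖y i‖ ^ 2 / c :=
          Finset.sum_le_sum fun i _ => hterm i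
      _ = (∑ i ∈ F, ‖(inner ℂ (x i) v : ℂ)‖ ^ 2 * ‖y i‖ ^ 2) / c := by
          rw [Finset.sum_div]
      _ ≤ K ^ 2 * ‖v‖ ^ 2 / c := by
          gcongr
          exact hDy v F
      _ = K ^ 2 / c * ‖v‖ ^ 2 := by ring
      _ ≤ B * ‖v‖ ^ 2 := by
          apply mul_le_mul_of_nonneg_right (le_max_left _ _) (by positivity)
  have hupy : ∀ (v : H) (F : Finset ℕ),
      ∑ i ∈ F, (βr i * ‖(inner ℂ v (y i) : ℂ)‖) ^ 2 ≤ B * ‖v‖ ^ 2 := by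
    intro v F
    have hterm : ∀ i, (βr i * ‖(inner ℂ v (y i) : ℂ)‖) ^ 2
        ≤ ‖(inner ℂ (y i) v : ℂ)‖ ^ 2 * ‖x i‖ ^ 2 / c := by
      intro i
      rw [mul_pow, hβsq, norm_inner_symm]
      have hid : ‖x i‖ / ‖y i‖ * ‖(inner ℂ (y i) v : ℂ)‖ ^ 2
          = (‖(inner ℂ (y i) v : ℂ)‖ ^ 2 * ‖x i‖ ^ 2) / (‖x i‖ * ‖y i‖) := by
        rw [eq_div_iff (mul_pos (hx0 i) (hy0 i)).ne']
        field_simp [(hx0 i).ne', (hy0 i).ne']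
      rw [hid]
      exact div_le_div_of_nonneg_left (by positivity) hc (hcle i)
    calc ∑ i ∈ F, (βr i * ‖(inner ℂ v (y i) : ℂ)‖) ^ 2
        ≤ ∑ i ∈ F, ‖(inner ℂ (y i) v : ℂ)‖ ^ 2 * ‖x i‖ ^ 2 / c :=
          Finset.sum_le_sum fun i _ => hterm i
      _ = (∑ i ∈ F, ‖(inner ℂ (y i) v : ℂ)‖ ^ 2 * ‖x i‖ ^ 2) / c := by
          rw [Finset.sum_div]
      _ ≤ K ^ 2 * ‖v‖ ^ 2 / c := by
          gcongr
          exact hDx v F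
      _ = K ^ 2 / c * ‖v‖ ^ 2 := by ring
      _ ≤ B * ‖v‖ ^ 2 := by
          apply mul_le_mul_of_nonneg_right (le_max_left _ _) (by positivity)
  -- summability and tsum bounds
  have hsumx : ∀ v : H, Summable (fun i => (αr i * ‖(inner ℂ v (x i) : ℂ)‖) ^ 2) :=
    fun v => summable_of_sum_le (fun i => by positivity) (hupx v)
  have hsumy : ∀ v : H, Summable (fun i => (βr i * ‖(inner ℂ v (y i) : ℂ)‖) ^ 2) :=
    fun v => summable_of_sum_le (fun i => by positivity) (hupy v)
  have htsumx : ∀ v : H, ∑' i, (αr i * ‖(inner ℂ v (x i) : ℂ)‖) ^ 2 ≤ B * ‖v‖ ^ 2 :=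
    fun v => Summable.tsum_le_of_sum_le (hsumx v) (hupx v)
  have htsumy : ∀ v : H, ∑' i, (βr i * ‖(inner ℂ v (y i) : ℂ)‖) ^ 2 ≤ B * ‖v‖ ^ 2 :=
    fun v => Summable.tsum_le_of_sum_le (hsumy v) (hupy v)
  have hSxnn : ∀ v : H, 0 ≤ ∑' i, (αr i * ‖(inner ℂ v (x i) : ℂ)‖) ^ 2 :=
    fun v => tsum_nonneg fun i => by positivity
  have hSynn : ∀ v : H, 0 ≤ ∑' i, (βr i * ‖(inner ℂ v (y i) : ℂ)‖) ^ 2 :=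
    fun v => tsum_nonneg fun i => by positivity
  -- lower bound via Cauchy–Schwarz
  have hlow : ∀ v : H, ‖v‖ ^ 2 * ‖v‖ ^ 2 ≤
      (∑' i, (αr i * ‖(inner ℂ v (x i) : ℂ)‖) ^ 2) *
      (∑' i, (βr i * ‖(inner ℂ v (y i) : ℂ)‖) ^ 2) := by
    intro v
    set Sx := ∑' i, (αr i * ‖(inner ℂ v (x i) : ℂ)‖) ^ 2 with hSx
    set Sy := ∑' i, (βr i * ‖(inner ℂ v (y i) : ℂ)‖) ^ 2 with hSy
    have hhs : HasSum (fun i => (inner ℂ (y i) v : ℂ) * (inner ℂ v (x i) : ℂ))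
        ((inner ℂ v v : ℂ)) := by
      have h2 := (h_framing v).mapL (innerSL ℂ v)
      simpa [innerSL_apply_apply, inner_smul_right] using h2
    have hterm : ∀ i, ‖((inner ℂ (y i) v : ℂ) * (inner ℂ v (x i) : ℂ))‖
        = (αr i * ‖(inner ℂ v (x i) : ℂ)‖) * (βr i * ‖(inner ℂ v (y i) : ℂ)‖) := by
      intro i
      rw [norm_mul, norm_inner_symm (y i) v]
      have h1 : (αr i * ‖(inner ℂ v (x i) : ℂ)‖) * (βr i * ‖(inner ℂ v (y i) : ℂ)‖)
          = (αr i * βr i) * (‖(inner ℂ (y i) v : ℂ)‖ * ‖(inner ℂ v (x i) : ℂ)‖) := by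
        rw [norm_inner_symm (y i) v]; ring
      rw [h1, hαβ i, one_mul, norm_inner_symm v (y i)]
    have hps : ∀ F : Finset ℕ,
        ∑ i ∈ F, (αr i * ‖(inner ℂ v (x i) : ℂ)‖) * (βr i * ‖(inner ℂ v (y i) : ℂ)‖)
        ≤ Real.sqrt (Sx * Sy) := by
      intro F
      have hcs := Finset.sum_mul_sq_le_sq_mul_sq F
        (fun i => αr i * ‖(inner ℂ v (x i) : ℂ)‖) (fun i => βr i * ‖(inner ℂ v (y i) : ℂ)‖)
      have h1 : ∑ i ∈ F, (αr i * ‖(inner ℂ v (x i) : ℂ)‖) ^ 2 ≤ Sx :=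
        Summable.sum_le_tsum F (fun i _ => by positivity) (hsumx v)
      have h2 : ∑ i ∈ F, (βr i * ‖(inner ℂ v (y i) : ℂ)‖) ^ 2 ≤ Sy :=
        Summable.sum_le_tsum F (fun i _ => by positivity) (hsumy v)
      have h3 : (∑ i ∈ F, (αr i * ‖(inner ℂ v (x i) : ℂ)‖)
          * (βr i * ‖(inner ℂ v (y i) : ℂ)‖)) ^ 2 ≤ Sx * Sy :=
        le_trans hcs (mul_le_mul h1 h2 (Finset.sum_nonneg fun i _ => by positivity)
          (hSxnn v))
      rw [Real.le_sqrt (Finset.sum_nonneg fun i _ => by positivity)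
        (mul_nonneg (hSxnn v) (hSynn v))]
      exact h3
    have hsumab : Summable (fun i =>
        (αr i * ‖(inner ℂ v (x i) : ℂ)‖) * (βr i * ‖(inner ℂ v (y i) : ℂ)‖)) :=
      summable_of_sum_le (fun i => by positivity) hps
    have hnormsum : Summable (fun i =>
        ‖((inner ℂ (y i) v : ℂ) * (inner ℂ v (x i) : ℂ))‖) := by
      exact (summable_congr fun i => (hterm i).symm).mp hsumab
    have hvv : ‖v‖ ^ 2 ≤ Real.sqrt (Sx * Sy) := by
      have h0 : ‖(inner ℂ v v : ℂ)‖ = ‖v‖ ^ 2 := by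
        rw [inner_self_eq_norm_sq_to_K, norm_pow, RCLike.norm_ofReal, abs_norm]
      calc ‖v‖ ^ 2 = ‖(inner ℂ v v : ℂ)‖ := h0.symm
        _ = ‖∑' i, (inner ℂ (y i) v : ℂ) * (inner ℂ v (x i) : ℂ)‖ := by rw [hhs.tsum_eq]
        _ ≤ ∑' i, ‖((inner ℂ (y i) v : ℂ) * (inner ℂ v (x i) : ℂ))‖ :=
            norm_tsum_le_tsum_norm hnormsum
        _ = ∑' i, (αr i * ‖(inner ℂ v (x i) : ℂ)‖) * (βr i * ‖(inner ℂ v (y i) : ℂ)‖) :=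
            tsum_congr hterm
        _ ≤ Real.sqrt (Sx * Sy) := Summable.tsum_le_of_sum_le hsumab hps
    have hsq := Real.sq_sqrt (mul_nonneg (hSxnn v) (hSynn v))
    nlinarith [hvv, Real.sqrt_nonneg (Sx * Sy), sq_nonneg (‖v‖ : ℝ)]
  -- assemble
  refine ⟨fun i => ((αr i : ℝ) : ℂ), fun i => ((βr i : ℝ) : ℂ), ?_, ?_, ?_⟩
  · intro i
    rw [Complex.conj_ofReal, ← Complex.ofReal_mul, hαβ i, Complex.ofReal_one]
  · refine ⟨A, B, hApos, hAB, fun v => ?_⟩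
    simp only [hsx v]
    refine ⟨hsumx v, ?_, htsumx v⟩
    rcases eq_or_ne v 0 with rfl | hv
    · simpa using hSxnn 0
    · have hv2 : (0 : ℝ) < ‖v‖ ^ 2 := pow_pos (norm_pos_iff.mpr hv) 2
      have key : ‖v‖ ^ 2 * ‖v‖ ^ 2
          ≤ (∑' i, (αr i * ‖(inner ℂ v (x i) : ℂ)‖) ^ 2) * (B * ‖v‖ ^ 2) :=
        le_trans (hlow v) (mul_le_mul_of_nonneg_left (htsumy v) (hSxnn v))
      have h5 : ‖v‖ ^ 2 ≤ (∑' i, (αr i * ‖(inner ℂ v (x i) : ℂ)‖) ^ 2) * B := by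
        have := le_of_mul_le_mul_right (by linarith [key] :
          ‖v‖ ^ 2 * ‖v‖ ^ 2 ≤ ((∑' i, (αr i * ‖(inner ℂ v (x i) : ℂ)‖) ^ 2) * B) * ‖v‖ ^ 2)
          hv2
        linarith
      rw [hAdef, one_div, inv_mul_le_iff₀ hBpos]
      linarith [h5]
  · refine ⟨A, B, hApos, hAB, fun v => ?_⟩
    simp only [hsy v]
    refine ⟨hsumy v, ?_, htsumy v⟩
    rcases eq_or_ne v 0 with rfl | hv
    · simpa using hSynn 0
    · have hv2 : (0 : ℝ) < ‖v‖ ^ 2 := pow_pos (norm_pos_iff.mpr hv) 2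
      have key : ‖v‖ ^ 2 * ‖v‖ ^ 2
          ≤ (∑' i, (βr i * ‖(inner ℂ v (y i) : ℂ)‖) ^ 2) * (B * ‖v‖ ^ 2) := by
        have := hlow v
        have h6 := mul_le_mul_of_nonneg_left (htsumx v) (hSynn v)
        nlinarith [hSxnn v, hSynn v]
      have h5 : ‖v‖ ^ 2 ≤ (∑' i, (βr i * ‖(inner ℂ v (y i) : ℂ)‖) ^ 2) * B := by
        have := le_of_mul_le_mul_right (by linarith [key] :
          ‖v‖ ^ 2 * ‖v‖ ^ 2 ≤ ((∑' i, (βr i * ‖(inner ℂ v (y i) : ℂ)‖) ^ 2) * B) * ‖v‖ ^ 2)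
          hv2
        linarith
      rw [hAdef, one_div, inv_mul_le_iff₀ hBpos]
      linarith [h5]
end

section
/- Let H be a separable complex Hilbert space, let (U_n)_{n∈ℕ} and (W_n)_{n∈ℕ} be sequences of unitary operators on H, and let x, y ∈ H. If the pair ((U_n x)_{n∈ℕ}, (W_n y)_{n∈ℕ}) is a framing for H, i.e. for every z ∈ H the family (⟨z, W_n y⟩·U_n x)_{n∈ℕ} is summable with sum z, then both (U_n x)_{n∈ℕ} and (W_n y)_{n∈ℕ} are frames for H. -/
universe u

lemma aux_bdd_partial_sums {G : Type*} [NormedAddCommGroup G] [CompleteSpace G]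
    {f : ℕ → G} (hf : Summable f) :
    ∃ M : ℝ, ∀ F : Finset ℕ, ‖∑ n ∈ F, f n‖ ≤ M := by
  obtain ⟨s, hs⟩ := (summable_iff_vanishing.mp hf) (Metric.ball 0 1)
    (Metric.ball_mem_nhds 0 one_pos)
  refine ⟨(∑ n ∈ s, ‖f n‖) + 1, fun F => ?_⟩
  have hsplit : ∑ n ∈ F, f n = (∑ n ∈ F \ s, f n) + ∑ n ∈ F ∩ s, f n := by
    rw [← Finset.sum_union (Finset.disjoint_sdiff_inter F s), Finset.sdiff_union_inter]
  rw [hsplit]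
  refine (norm_add_le _ _).trans ?_
  have h1 : ‖∑ n ∈ F \ s, f n‖ < 1 := by
    have := hs (F \ s) Finset.sdiff_disjoint
    simpa [Metric.mem_ball, dist_zero_right] using this
  have h2 : ‖∑ n ∈ F ∩ s, f n‖ ≤ ∑ n ∈ s, ‖f n‖ :=
    (norm_sum_le _ _).trans (Finset.sum_le_sum_of_subset_of_nonneg
      (Finset.inter_subset_right) (fun _ _ _ => norm_nonneg _))
  linarith

lemma aux_rademacher {H : Type*} [NormedAddCommGroup H] [InnerProductSpace ℂ H]
    (v : ℕ → H) (F : Finset ℕ) :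
    ∑ s ∈ F.powerset, ‖∑ n ∈ F, (if n ∈ s then v n else -v n)‖ ^ 2
      = 2 ^ F.card * ∑ n ∈ F, ‖v n‖ ^ 2 := by
  classical
  induction F using Finset.induction_on with
  | empty => simp
  | @insert a F ha ih =>
    rw [Finset.sum_powerset_insert ha]
    have key : ∀ s ∈ F.powerset,
        ‖∑ n ∈ insert a F, (if n ∈ s then v n else -v n)‖ ^ 2
          + ‖∑ n ∈ insert a F, (if n ∈ insert a s then v n else -v n)‖ ^ 2
        = 2 * (‖∑ n ∈ F, (if n ∈ s then v n else -v n)‖ ^ 2 + ‖v a‖ ^ 2) := by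
      intro s hs
      rw [Finset.mem_powerset] at hs
      have has : a ∉ s := fun h => ha (hs h)
      set w := ∑ n ∈ F, (if n ∈ s then v n else -v n) with hw
      have h1 : ∑ n ∈ insert a F, (if n ∈ s then v n else -v n) = w - v a := by
        rw [Finset.sum_insert ha, if_neg has]
        abel
      have h2 : ∑ n ∈ insert a F, (if n ∈ insert a s then v n else -v n) = w + v a := by
        rw [Finset.sum_insert ha, if_pos (Finset.mem_insert_self a s)]
        have : ∑ n ∈ F, (if n ∈ insert a s then v n else -v n) = w := by
          apply Finset.sum_congr rfl
          intro n hn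
          have : n ≠ a := fun h => ha (h ▸ hn)
          simp [Finset.mem_insert, this]
        rw [this]; abel
      rw [h1, h2]
      have := parallelogram_law_with_norm ℂ w (v a)
      nlinarith [this]
    calc ∑ s ∈ F.powerset, ‖∑ n ∈ insert a F, (if n ∈ s then v n else -v n)‖ ^ 2
          + ∑ s ∈ F.powerset, ‖∑ n ∈ insert a F, (if n ∈ insert a s then v n else -v n)‖ ^ 2
        = ∑ s ∈ F.powerset, 2 * (‖∑ n ∈ F, (if n ∈ s then v n else -v n)‖ ^ 2 + ‖v a‖ ^ 2) := by
          rw [← Finset.sum_add_distrib]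
          exact Finset.sum_congr rfl key
      _ = 2 ^ (insert a F).card * ∑ n ∈ insert a F, ‖v n‖ ^ 2 := by
          simp only [mul_add, Finset.sum_add_distrib, ← Finset.mul_sum, ih,
            Finset.sum_const, Finset.card_powerset, nsmul_eq_mul,
            Finset.sum_insert ha, Finset.card_insert_of_notMem ha]
          push_cast
          ring

lemma aux_sq_sum_le {H : Type*} [NormedAddCommGroup H] [InnerProductSpace ℂ H]
    (v : ℕ → H) (F : Finset ℕ) (M : ℝ)
    (hM : ∀ s ∈ F.powerset, ‖∑ n ∈ F, (if n ∈ s then v n else -v n)‖ ≤ M) :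
    ∑ n ∈ F, ‖v n‖ ^ 2 ≤ M ^ 2 := by
  classical
  have hM0 : 0 ≤ M := le_trans (norm_nonneg _) (hM F (Finset.mem_powerset_self F))
  have h1 : ∑ s ∈ F.powerset, ‖∑ n ∈ F, (if n ∈ s then v n else -v n)‖ ^ 2
      ≤ ∑ s ∈ F.powerset, M ^ 2 :=
    Finset.sum_le_sum fun s hs => pow_le_pow_left₀ (norm_nonneg _) (hM s hs) 2
  rw [aux_rademacher, Finset.sum_const, Finset.card_powerset, nsmul_eq_mul] at h1
  have h2 : (0:ℝ) < 2 ^ F.card := by positivity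
  refine le_of_mul_le_mul_left ?_ h2
  push_cast at h1 ⊢
  linarith

lemma aux_signed_bound {G : Type*} [NormedAddCommGroup G] (g : ℕ → G) (c : ℝ)
    (h : ∀ F : Finset ℕ, ‖∑ n ∈ F, g n‖ ≤ c) (F s : Finset ℕ) :
    ‖∑ n ∈ F, (if n ∈ s then g n else -g n)‖ ≤ 2 * c := by
  classical
  rw [Finset.sum_ite]
  refine (norm_add_le _ _).trans ?_
  have h2 : ‖∑ n ∈ F.filter (fun n => n ∉ s), -g n‖
      = ‖∑ n ∈ F.filter (fun n => n ∉ s), g n‖ := by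
    rw [Finset.sum_neg_distrib, norm_neg]
  rw [h2]
  have := h (F.filter (fun n => n ∈ s))
  have := h (F.filter (fun n => n ∉ s))
  linarith

lemma aux_tsum_cs (a b : ℕ → ℝ) (ha : ∀ n, 0 ≤ a n) (hb : ∀ n, 0 ≤ b n)
    (hA : Summable fun n => a n ^ 2) (hB : Summable fun n => b n ^ 2) :
    Summable (fun n => a n * b n) ∧
      (∑' n, a n * b n) ^ 2 ≤ (∑' n, a n ^ 2) * (∑' n, b n ^ 2) := by
  have hsum : Summable (fun n => a n * b n) := by
    refine Summable.of_nonneg_of_le (fun n => mul_nonneg (ha n) (hb n))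
      (fun n => ?_) ((hA.add hB).div_const 2)
    nlinarith [sq_nonneg (a n - b n)]
  refine ⟨hsum, ?_⟩
  set P := ∑' n, a n ^ 2
  set Q := ∑' n, b n ^ 2
  have hP : 0 ≤ P := tsum_nonneg fun n => sq_nonneg _
  have hQ : 0 ≤ Q := tsum_nonneg fun n => sq_nonneg _
  have hT : ∑' n, a n * b n ≤ Real.sqrt (P * Q) := by
    refine Summable.tsum_le_of_sum_le hsum fun F => ?_
    rw [Real.le_sqrt (Finset.sum_nonneg fun n _ => mul_nonneg (ha n) (hb n))
      (mul_nonneg hP hQ)]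
    refine (Finset.sum_mul_sq_le_sq_mul_sq F a b).trans ?_
    exact mul_le_mul (Summable.sum_le_tsum F (fun n _ => sq_nonneg _) hA)
      (Summable.sum_le_tsum F (fun n _ => sq_nonneg _) hB)
      (Finset.sum_nonneg fun n _ => sq_nonneg _) hP
  have hT0 : 0 ≤ ∑' n, a n * b n := tsum_nonneg fun n => mul_nonneg (ha n) (hb n)
  nlinarith [Real.sq_sqrt (mul_nonneg hP hQ), Real.sqrt_nonneg (P * Q)]


/-- **Framings generated by unitary systems consist of frames**
(Han–Larson–Liu–Liu).  Let `(Uₙ)` and `(Wₙ)` be sequences of unitary operators on a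
separable complex Hilbert space `H` and `x, y ∈ H`.  If `((Uₙ x), (Wₙ y))` is a framing
for `H`, then both `(Uₙ x)` and `(Wₙ y)` are frames for `H`. -/
theorem unitary_system_framing_gives_frames
    {H : Type u} [NormedAddCommGroup H] [InnerProductSpace ℂ H] [CompleteSpace H]
    [TopologicalSpace.SeparableSpace H]
    (U W : ℕ → (H ≃ₗᵢ[ℂ] H)) (x y : H)
    (h_framing : ∀ z : H, HasSum (fun n : ℕ => (inner ℂ (W n y) z : ℂ) • U n x) z) :
    IsFrame (fun n => U n x) ∧ IsFrame (fun n => W n y) := by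
  classical
  by_cases htriv : ∀ v : H, v = 0
  · constructor <;>
    · refine ⟨1, 1, one_pos, le_refl 1, fun v => ?_⟩
      rw [htriv v]
      simp
  · push_neg at htriv
    obtain ⟨v₀, hv₀⟩ := htriv
    have hx : x ≠ 0 := by
      rintro rfl
      exact hv₀ ((by simpa using h_framing v₀ :
        HasSum (fun _ : ℕ => (0:H)) v₀).unique hasSum_zero)
    have hy : y ≠ 0 := by
      rintro rfl
      exact hv₀ ((by simpa using h_framing v₀ :
        HasSum (fun _ : ℕ => (0:H)) v₀).unique hasSum_zero)
    have hxpos : (0:ℝ) < ‖x‖ ^ 2 := pow_pos (norm_pos_iff.mpr hx) 2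
    have hypos : (0:ℝ) < ‖y‖ ^ 2 := pow_pos (norm_pos_iff.mpr hy) 2
    -- the finite-section operators
    set S : Finset ℕ → H →L[ℂ] H :=
      fun F => ∑ n ∈ F, ContinuousLinearMap.smulRight (innerSL ℂ (W n y)) (U n x)
      with hSdef
    have hSapply : ∀ (F : Finset ℕ) (z : H),
        S F z = ∑ n ∈ F, (inner ℂ (W n y) z : ℂ) • U n x := by
      intro F z
      simp [hSdef, ContinuousLinearMap.sum_apply]
    -- uniform boundedness
    have hpt : ∀ z : H, ∃ Cz, ∀ F : Finset ℕ, ‖S F z‖ ≤ Cz := by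
      intro z
      obtain ⟨M, hM⟩ := aux_bdd_partial_sums (h_framing z).summable
      exact ⟨M, fun F => by rw [hSapply]; exact hM F⟩
    obtain ⟨C₀, hC₀⟩ := banach_steinhaus hpt
    set C := max C₀ 0 with hCdef
    have hCnn : (0:ℝ) ≤ C := le_max_right _ _
    have hSop : ∀ F : Finset ℕ, ‖S F‖ ≤ C := fun F => (hC₀ F).trans (le_max_left _ _)
    have hbound : ∀ (F : Finset ℕ) (z : H),
        ‖∑ n ∈ F, (inner ℂ (W n y) z : ℂ) • U n x‖ ≤ C * ‖z‖ := by
      intro F z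
      rw [← hSapply]
      exact ((S F).le_opNorm z).trans
        (mul_le_mul_of_nonneg_right (hSop F) (norm_nonneg z))
    -- Bessel bound for (W n y), finite sections
    have hW_finset : ∀ (z : H) (F : Finset ℕ),
        ∑ n ∈ F, ‖(inner ℂ z (W n y) : ℂ)‖ ^ 2 ≤ (4 * C ^ 2 / ‖x‖ ^ 2) * ‖z‖ ^ 2 := by
      intro z F
      have h1 := aux_sq_sum_le (fun n => (inner ℂ (W n y) z : ℂ) • U n x) F
        (2 * (C * ‖z‖))
        (fun s _ => aux_signed_bound _ _ (fun F' => hbound F' z) F s)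
      have h2 : ∑ n ∈ F, ‖(inner ℂ (W n y) z : ℂ) • U n x‖ ^ 2
          = (∑ n ∈ F, ‖(inner ℂ z (W n y) : ℂ)‖ ^ 2) * ‖x‖ ^ 2 := by
        rw [Finset.sum_mul]
        refine Finset.sum_congr rfl fun n _ => ?_
        rw [norm_smul, LinearIsometryEquiv.norm_map, mul_pow,
          ← norm_inner_symm]
      rw [h2] at h1
      rw [div_mul_eq_mul_div, le_div_iff₀ hxpos]
      nlinarith [h1]
    -- Bessel bound for (U n x), finite sections
    have hU_finset : ∀ (w : H) (F : Finset ℕ),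
        ∑ n ∈ F, ‖(inner ℂ w (U n x) : ℂ)‖ ^ 2 ≤ (4 * C ^ 2 / ‖y‖ ^ 2) * ‖w‖ ^ 2 := by
      intro w F
      have hpair : ∀ (u : H) (F' : Finset ℕ),
          (inner ℂ (S F' u) w : ℂ)
            = ∑ n ∈ F', (inner ℂ u (W n y) : ℂ) * (inner ℂ (U n x) w : ℂ) := by
        intro u F'
        rw [hSapply, sum_inner]
        refine Finset.sum_congr rfl fun n _ => ?_
        rw [inner_smul_left, inner_conj_symm]
      have he : ∀ (u : H) (F' : Finset ℕ),
          ‖∑ n ∈ F', (inner ℂ u (W n y) : ℂ) * (inner ℂ (U n x) w : ℂ)‖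
            ≤ C * ‖w‖ * ‖u‖ := by
        intro u F'
        rw [← hpair]
        refine (norm_inner_le_norm _ _).trans ?_
        have := ((S F').le_opNorm u).trans
          (mul_le_mul_of_nonneg_right (hSop F') (norm_nonneg u))
        nlinarith [norm_nonneg w, norm_nonneg (S F' u)]
      have htv : ∀ (F' s : Finset ℕ),
          ‖∑ n ∈ F', (if n ∈ s then (inner ℂ (U n x) w : ℂ) • W n y
            else -((inner ℂ (U n x) w : ℂ) • W n y))‖ ≤ 2 * (C * ‖w‖) := by
        intro F' s
        set t := ∑ n ∈ F', (if n ∈ s then (inner ℂ (U n x) w : ℂ) • W n y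
          else -((inner ℂ (U n x) w : ℂ) • W n y)) with htdef
        have hinner : (inner ℂ t t : ℂ)
            = ∑ n ∈ F', (if n ∈ s then (inner ℂ t (W n y) : ℂ) * (inner ℂ (U n x) w : ℂ)
              else -((inner ℂ t (W n y) : ℂ) * (inner ℂ (U n x) w : ℂ))) := by
          rw [htdef, inner_sum]
          refine Finset.sum_congr rfl fun n _ => ?_
          rw [apply_ite (fun v => (inner ℂ t v : ℂ)), inner_neg_right, inner_smul_right]
          rw [← htdef]; ring_nf
        have hsigned := aux_signed_bound
          (fun n => (inner ℂ t (W n y) : ℂ) * (inner ℂ (U n x) w : ℂ))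
          (C * ‖w‖ * ‖t‖) (fun F'' => he t F'') F' s
        have hnorm : ‖t‖ ^ 2 = ‖(inner ℂ t t : ℂ)‖ := by
          rw [inner_self_eq_norm_sq_to_K]
          simp [norm_pow]
        rw [hinner] at hnorm
        have hle : ‖t‖ ^ 2 ≤ 2 * (C * ‖w‖ * ‖t‖) := by rw [hnorm]; exact hsigned
        by_cases ht0 : ‖t‖ = 0
        · rw [ht0]; positivity
        · have htpos : 0 < ‖t‖ := lt_of_le_of_ne (norm_nonneg t) (Ne.symm ht0)
          nlinarith [hle]
      have h1 := aux_sq_sum_le (fun n => (inner ℂ (U n x) w : ℂ) • W n y) F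
        (2 * (C * ‖w‖)) (fun s _ => htv F s)
      have h2 : ∑ n ∈ F, ‖(inner ℂ (U n x) w : ℂ) • W n y‖ ^ 2
          = (∑ n ∈ F, ‖(inner ℂ w (U n x) : ℂ)‖ ^ 2) * ‖y‖ ^ 2 := by
        rw [Finset.sum_mul]
        refine Finset.sum_congr rfl fun n _ => ?_
        rw [norm_smul, LinearIsometryEquiv.norm_map, mul_pow, ← norm_inner_symm]
      rw [h2] at h1
      rw [div_mul_eq_mul_div, le_div_iff₀ hypos]
      nlinarith [h1]
    -- summability and tsum bounds
    set B₁ : ℝ := 4 * C ^ 2 / ‖x‖ ^ 2 with hB₁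
    set B₂ : ℝ := 4 * C ^ 2 / ‖y‖ ^ 2 with hB₂
    have hWsummable : ∀ z : H, Summable (fun n => ‖(inner ℂ z (W n y) : ℂ)‖ ^ 2) :=
      fun z => summable_of_sum_le (fun n => sq_nonneg _) (hW_finset z)
    have hUsummable : ∀ w : H, Summable (fun n => ‖(inner ℂ w (U n x) : ℂ)‖ ^ 2) :=
      fun w => summable_of_sum_le (fun n => sq_nonneg _) (hU_finset w)
    have hWtsum : ∀ z : H, ∑' n, ‖(inner ℂ z (W n y) : ℂ)‖ ^ 2 ≤ B₁ * ‖z‖ ^ 2 :=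
      fun z => Summable.tsum_le_of_sum_le (hWsummable z) (hW_finset z)
    have hUtsum : ∀ w : H, ∑' n, ‖(inner ℂ w (U n x) : ℂ)‖ ^ 2 ≤ B₂ * ‖w‖ ^ 2 :=
      fun w => Summable.tsum_le_of_sum_le (hUsummable w) (hU_finset w)
    -- lower bound: ‖v‖⁴ ≤ P v * Q v
    have hlower : ∀ v : H,
        (‖v‖ ^ 2) ^ 2 ≤ (∑' n, ‖(inner ℂ v (W n y) : ℂ)‖ ^ 2)
          * (∑' n, ‖(inner ℂ v (U n x) : ℂ)‖ ^ 2) := by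
      intro v
      have hcs := aux_tsum_cs (fun n => ‖(inner ℂ v (W n y) : ℂ)‖)
        (fun n => ‖(inner ℂ v (U n x) : ℂ)‖) (fun n => norm_nonneg _)
        (fun n => norm_nonneg _) (hWsummable v) (hUsummable v)
      have hhs : HasSum
          (fun n => (inner ℂ (W n y) v : ℂ) * (inner ℂ v (U n x) : ℂ))
          (inner ℂ v v : ℂ) := by
        have := (innerSL ℂ v).hasSum (h_framing v)
        simpa [inner_smul_right, mul_comm] using this
      have hns : Summable (fun n => ‖(inner ℂ (W n y) v : ℂ) * (inner ℂ v (U n x) : ℂ)‖) := by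
        refine Summable.congr hcs.1 fun n => ?_
        rw [norm_mul, ← norm_inner_symm]
      have hle1 : ‖v‖ ^ 2 ≤ ∑' n, ‖(inner ℂ v (W n y) : ℂ)‖ * ‖(inner ℂ v (U n x) : ℂ)‖ := by
        have h0 : ‖(inner ℂ v v : ℂ)‖ = ‖v‖ ^ 2 := by
          rw [inner_self_eq_norm_sq_to_K]; simp [norm_pow]
        rw [← h0, ← hhs.tsum_eq]
        refine (norm_tsum_le_tsum_norm hns).trans ?_
        refine le_of_eq (tsum_congr fun n => ?_)
        rw [norm_mul, ← norm_inner_symm]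
      have hT0 : (0:ℝ) ≤ ∑' n, ‖(inner ℂ v (W n y) : ℂ)‖ * ‖(inner ℂ v (U n x) : ℂ)‖ :=
        tsum_nonneg fun n => mul_nonneg (norm_nonneg _) (norm_nonneg _)
      nlinarith [hcs.2, hle1, hT0]
    -- assemble the frames
    set B₁' := max B₁ 1 with hB₁'
    set B₂' := max B₂ 1 with hB₂'
    have hB₁'1 : (1:ℝ) ≤ B₁' := le_max_right _ _
    have hB₂'1 : (1:ℝ) ≤ B₂' := le_max_right _ _
    have hB₁'pos : (0:ℝ) < B₁' := lt_of_lt_of_le one_pos hB₁'1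
    have hB₂'pos : (0:ℝ) < B₂' := lt_of_lt_of_le one_pos hB₂'1
    constructor
    · refine ⟨1 / B₁', B₂', one_div_pos.mpr hB₁'pos, ?_, fun v => ?_⟩
      · calc 1 / B₁' ≤ 1 := by
              rw [div_le_one hB₁'pos]; exact hB₁'1
          _ ≤ B₂' := hB₂'1
      refine ⟨hUsummable v, ?_, (hUtsum v).trans
        (mul_le_mul_of_nonneg_right (le_max_left _ _) (sq_nonneg _))⟩
      by_cases hv : v = 0
      · subst hv
        simp only [norm_zero]
        refine le_trans (by norm_num) (tsum_nonneg fun n => sq_nonneg _)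
      · have hvpos : (0:ℝ) < ‖v‖ ^ 2 := pow_pos (norm_pos_iff.mpr hv) 2
        have hP := (hWtsum v).trans
          (mul_le_mul_of_nonneg_right (le_max_left B₁ 1) (sq_nonneg ‖v‖))
        have hQ0 : (0:ℝ) ≤ ∑' n, ‖(inner ℂ v (U n x) : ℂ)‖ ^ 2 :=
          tsum_nonneg fun n => sq_nonneg _
        have hP0 : (0:ℝ) ≤ ∑' n, ‖(inner ℂ v (W n y) : ℂ)‖ ^ 2 :=
          tsum_nonneg fun n => sq_nonneg _
        rw [div_mul_eq_mul_div, one_mul, div_le_iff₀ hB₁'pos]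
        nlinarith [hlower v]
    · refine ⟨1 / B₂', B₁', one_div_pos.mpr hB₂'pos, ?_, fun v => ?_⟩
      · calc 1 / B₂' ≤ 1 := by
              rw [div_le_one hB₂'pos]; exact hB₂'1
          _ ≤ B₁' := hB₁'1
      refine ⟨hWsummable v, ?_, (hWtsum v).trans
        (mul_le_mul_of_nonneg_right (le_max_left _ _) (sq_nonneg _))⟩
      by_cases hv : v = 0
      · subst hv
        simp only [norm_zero]
        refine le_trans (by norm_num) (tsum_nonneg fun n => sq_nonneg _)
      · have hvpos : (0:ℝ) < ‖v‖ ^ 2 := pow_pos (norm_pos_iff.mpr hv) 2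
        have hQ := (hUtsum v).trans
          (mul_le_mul_of_nonneg_right (le_max_left B₂ 1) (sq_nonneg ‖v‖))
        have hQ0 : (0:ℝ) ≤ ∑' n, ‖(inner ℂ v (U n x) : ℂ)‖ ^ 2 :=
          tsum_nonneg fun n => sq_nonneg _
        have hP0 : (0:ℝ) ≤ ∑' n, ‖(inner ℂ v (W n y) : ℂ)‖ ^ 2 :=
          tsum_nonneg fun n => sq_nonneg _
        rw [div_mul_eq_mul_div, one_mul, div_le_iff₀ hB₂'pos]
        nlinarith [hlower v]
end
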